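/- Let p be an odd prime and let n be a positive multiple of p with n = sp, p ∤ s. Then for 1 ≤ k ≤ p − 1, C(n,k) ≡ sp·(−1)^{k−1}/k (mod p²), where 1/k denotes the inverse of k modulo p². Consequently, if d ≤ p−1 and ∑_{k=1}^{d} (−1)^{k−1}/k ≢ 0 (mod p) and 2^n ≡ 1 (mod p²), then p divides ∑_{k=0}^{n−d−1} C(n,k) = 2^n − 1 − ∑_{k=1}^{d} C(n,k) but p² does not. -/

import Mathlib

open Finset

section aux
variable (p : ℕ) (hp : p.Prime) (s : ℕ) (hs : 0 < s)

include hp hs in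
lemma aux_key (k : ℕ) :
    (s * p) * (s * p - 1).choose k = (s * p).choose (k + 1) * (k + 1) := by
  have h1 : 1 ≤ s * p := Nat.mul_pos hs hp.pos
  have := Nat.add_one_mul_choose_eq (s * p - 1) k
  rwa [Nat.sub_add_cancel h1] at this

include hp in
lemma aux_cop (k : ℕ) (hk1 : 1 ≤ k) (hk2 : k ≤ p - 1) : Nat.Coprime p k :=
  (Nat.Prime.coprime_iff_not_dvd hp).mpr
    (Nat.not_dvd_of_pos_of_lt hk1 (lt_of_le_of_lt hk2 (Nat.pred_lt hp.pos.ne')))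

include hp hs in
lemma aux_dvd_choose (k : ℕ) (hk1 : 1 ≤ k) (hk2 : k ≤ p - 1) :
    p ∣ (s * p).choose k := by
  obtain ⟨j, rfl⟩ : ∃ j, k = j + 1 := ⟨k - 1, (Nat.succ_pred_eq_of_pos hk1).symm⟩
  have hdvd : p ∣ (s * p).choose (j + 1) * (j + 1) := by
    rw [← aux_key p hp s hs]; exact Dvd.dvd.mul_right (dvd_mul_left p s) _
  exact (aux_cop p hp (j + 1) hk1 hk2).dvd_of_dvd_mul_right hdvd

include hp hs in
lemma aux_mod_p (j : ℕ) (hj : j ≤ p - 1 - 1) :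
    ((s * p - 1).choose j : ZMod p) = (-1) ^ j := by
  induction j with
  | zero => simp
  | succ i ih =>
    have hi := ih (le_trans (Nat.le_succ i) hj)
    have hpas : (s * p - 1).choose i + (s * p - 1).choose (i + 1) = (s * p).choose (i + 1) := by
      have h1 : 1 ≤ s * p := Nat.mul_pos hs hp.pos
      conv_rhs => rw [← Nat.sub_add_cancel h1]
      rw [Nat.choose_succ_succ]
    have hdvd : p ∣ (s * p).choose (i + 1) :=
      aux_dvd_choose p hp s hs (i + 1) (Nat.succ_le_succ (Nat.zero_le i))
        (le_trans hj (Nat.sub_le _ _))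
    have : ((s * p - 1).choose i : ZMod p) + ((s * p - 1).choose (i + 1) : ZMod p) = 0 := by
      rw [← Nat.cast_add, hpas, ZMod.natCast_eq_zero_iff]
      exact hdvd
    have : ((s * p - 1).choose (i + 1) : ZMod p) = -((s * p - 1).choose i : ZMod p) := by
      linear_combination this
    rw [this, hi, pow_succ]; ring



include hp hs in
lemma aux_part1 (k : ℕ) (hk1 : 1 ≤ k) (hk2 : k ≤ p - 1) :
    (((s * p).choose k : ZMod (p ^ 2))
      = (s : ZMod (p ^ 2)) * (p : ZMod (p ^ 2)) * (-1) ^ (k - 1) * (k : ZMod (p ^ 2))⁻¹) := by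
  obtain ⟨j, rfl⟩ : ∃ j, k = j + 1 := ⟨k - 1, (Nat.succ_pred_eq_of_pos hk1).symm⟩
  have hj : j ≤ p - 1 - 1 := by omega
  have hmodp : (p : ℤ) ∣ ((s * p - 1).choose j : ℤ) - (-1) ^ j := by
    rw [← ZMod.intCast_zmod_eq_zero_iff_dvd]
    push_cast
    rw [aux_mod_p p hp s hs j hj]
    ring
  obtain ⟨t, ht⟩ := hmodp
  have hpp : (p : ZMod (p ^ 2)) * (p : ZMod (p ^ 2)) = 0 := by
    have h0 : ((p ^ 2 : ℕ) : ZMod (p ^ 2)) = 0 := ZMod.natCast_self _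
    push_cast at h0
    linear_combination h0
  have hC : (p : ZMod (p ^ 2)) * ((s * p - 1).choose j : ZMod (p ^ 2))
      = (p : ZMod (p ^ 2)) * (-1) ^ j := by
    have ht2 : (((s * p - 1).choose j : ℤ) : ZMod (p ^ 2)) = (-1) ^ j + p * t := by
      rw [show ((s * p - 1).choose j : ℤ) = (-1) ^ j + p * t by linarith [ht]]
      push_cast
      ring
    push_cast at ht2
    rw [ht2]
    ring_nf
    linear_combination (t : ZMod (p ^ 2)) * hpp
  have hkey := aux_key p hp s hs j
  have hkeyC : ((s * p).choose (j + 1) : ZMod (p ^ 2)) * ((j + 1 : ℕ) : ZMod (p ^ 2))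
      = (s : ZMod (p ^ 2)) * (p : ZMod (p ^ 2)) * (-1) ^ j := by
    have := congrArg (fun m : ℕ => (m : ZMod (p ^ 2))) hkey
    push_cast at this ⊢
    linear_combination (s : ZMod (p ^ 2)) * hC - this
  have hu : IsUnit ((j + 1 : ℕ) : ZMod (p ^ 2)) := by
    rw [ZMod.isUnit_iff_coprime]
    exact (aux_cop p hp (j + 1) hk1 hk2).symm.pow_right 2
  have h1 : ((j + 1 : ℕ) : ZMod (p ^ 2)) * ((j + 1 : ℕ) : ZMod (p ^ 2))⁻¹ = 1 :=
    ZMod.mul_inv_of_unit _ hu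
  have : ((s * p).choose (j + 1) : ZMod (p ^ 2))
      = ((s * p).choose (j + 1) : ZMod (p ^ 2)) * (((j + 1 : ℕ) : ZMod (p ^ 2)) * ((j + 1 : ℕ) : ZMod (p ^ 2))⁻¹) := by
    rw [h1, mul_one]
  rw [this, show j + 1 - 1 = j from rfl, ← mul_assoc, hkeyC]

end aux

lemma aux_sum (n d : ℕ) (hd : d < n) :
    ∑ k ∈ range (n - d), n.choose k + ∑ k ∈ range (d + 1), n.choose k = 2 ^ n := by
  have h1 : ∑ k ∈ Ico (n - d) (n + 1), n.choose k = ∑ k ∈ range (d + 1), n.choose k := by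
    apply Finset.sum_nbij' (i := fun k => n - k) (j := fun k => n - k)
    · intro a ha
      simp only [mem_Ico] at ha
      simp only [mem_range]
      omega
    · intro a ha
      simp only [mem_range] at ha
      simp only [mem_Ico]
      omega
    · intro a ha
      simp only [mem_Ico] at ha
      omega
    · intro a ha
      simp only [mem_range] at ha
      omega
    · intro a ha
      simp only [mem_Ico] at ha
      exact (Nat.choose_symm (by omega)).symm
  rw [← h1, ← Nat.sum_range_choose n, Finset.range_eq_Ico, Finset.range_eq_Ico]
  exact Finset.sum_Ico_consecutive (fun k => n.choose k) (Nat.zero_le (n - d)) (show n - d ≤ n + 1 by omega)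



theorem stmt_19 (p : ℕ) (hp : p.Prime) (hpodd : Odd p) (s n : ℕ)
    (hs : 0 < s) (hps : ¬ p ∣ s) (hn : n = s * p) :
    (∀ k : ℕ, 1 ≤ k → k ≤ p - 1 →
      ((n.choose k : ZMod (p ^ 2))
        = (s : ZMod (p ^ 2)) * (p : ZMod (p ^ 2)) * (-1) ^ (k - 1) * (k : ZMod (p ^ 2))⁻¹)) ∧
    (∀ d : ℕ, 1 ≤ d → d ≤ p - 1 →
      (∑ k ∈ Finset.Icc 1 d, (-1 : ZMod p) ^ (k - 1) * (k : ZMod p)⁻¹) ≠ 0 →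
      (2 : ZMod (p ^ 2)) ^ n = 1 →
      ((p : ℤ) ∣ ∑ k ∈ Finset.range (n - d), (n.choose k : ℤ) ∧
        ¬ ((p : ℤ) ^ 2 ∣ ∑ k ∈ Finset.range (n - d), (n.choose k : ℤ)))) := by
  subst hn
  haveI : Fact p.Prime := ⟨hp⟩
  refine ⟨fun k hk1 hk2 => aux_part1 p hp s hs k hk1 hk2, fun d hd1 hd2 hsum h2n => ?_⟩
  have hp1 : 1 < p := hp.one_lt
  have hdn : d < s * p := by
    have : p ≤ s * p := Nat.le_mul_of_pos_left p hs
    omega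
  set T : ℤ := ∑ k ∈ Finset.range (s * p - d), ((s * p).choose k : ℤ) with hT
  have hTsum : T + ∑ k ∈ Finset.range (d + 1), ((s * p).choose k : ℤ) = 2 ^ (s * p) := by
    rw [hT]
    exact_mod_cast congrArg (Nat.cast : ℕ → ℤ) (aux_sum (s * p) d hdn)
  set V : ZMod (p ^ 2) := ∑ k ∈ Finset.Icc 1 d, (-1) ^ (k - 1) * (k : ZMod (p ^ 2))⁻¹ with hV
  have hsplit : ∑ k ∈ Finset.range (d + 1), ((s * p).choose k : ZMod (p ^ 2))
      = 1 + ∑ k ∈ Finset.Icc 1 d, ((s * p).choose k : ZMod (p ^ 2)) := by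
    rw [Finset.range_eq_Ico,
      ← Finset.sum_Ico_consecutive (fun k => ((s * p).choose k : ZMod (p ^ 2)))
        (Nat.zero_le 1) (by omega)]
    rw [Finset.Ico_add_one_right_eq_Icc]
    simp
  have hT2 : (T : ZMod (p ^ 2)) = -((s : ZMod (p ^ 2)) * (p : ZMod (p ^ 2))) * V := by
    have hc := congrArg (fun z : ℤ => (z : ZMod (p ^ 2))) hTsum
    push_cast at hc
    rw [h2n] at hc
    have hterm : ∑ k ∈ Finset.Icc 1 d, ((s * p).choose k : ZMod (p ^ 2))
        = (s : ZMod (p ^ 2)) * (p : ZMod (p ^ 2)) * V := by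
      rw [hV, Finset.mul_sum]
      refine Finset.sum_congr rfl fun k hk => ?_
      rw [Finset.mem_Icc] at hk
      rw [aux_part1 p hp s hs k hk.1 (le_trans hk.2 hd2)]
      ring
    rw [hsplit, hterm] at hc
    linear_combination hc
  set W : ℕ := V.val with hW
  have hWV : ((W : ℕ) : ZMod (p ^ 2)) = V := by rw [hW, ZMod.natCast_val, ZMod.cast_id]
  have hdvd2 : ((p : ℤ)) ^ 2 ∣ T + (s : ℤ) * (p : ℤ) * (W : ℤ) := by
    have h0 : ((T + (s : ℤ) * (p : ℤ) * (W : ℤ) : ℤ) : ZMod (p ^ 2)) = 0 := by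
      push_cast
      rw [hT2, hWV]
      ring
    rw [ZMod.intCast_zmod_eq_zero_iff_dvd] at h0
    exact_mod_cast h0
  obtain ⟨m, hm⟩ := hdvd2
  constructor
  · exact ⟨(p : ℤ) * m - (s : ℤ) * (W : ℤ), by linear_combination hm⟩
  · intro hcon
    obtain ⟨q, hq⟩ := hcon
    have hps' : (p : ℤ) * ((s : ℤ) * (W : ℤ)) = (p : ℤ) * ((p : ℤ) * (m - q)) := by
      linear_combination hm - hq
    have hpW : (s : ℤ) * (W : ℤ) = (p : ℤ) * (m - q) :=
      mul_left_cancel₀ (by exact_mod_cast hp.pos.ne') hps'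
    have hdvdsW : (p : ℕ) ∣ s * W := by
      have : (p : ℤ) ∣ ((s * W : ℕ) : ℤ) := ⟨m - q, by push_cast; linear_combination hpW⟩
      exact_mod_cast this
    rcases (Nat.Prime.dvd_mul hp).mp hdvdsW with h | h
    · exact hps h
    · have hW0 : (W : ZMod p) = 0 := (ZMod.natCast_eq_zero_iff W p).mpr h
      have hcast : (W : ZMod p)
          = ∑ k ∈ Finset.Icc 1 d, (-1 : ZMod p) ^ (k - 1) * (k : ZMod p)⁻¹ := by
        have h1 : (W : ZMod p) = ZMod.castHom (dvd_pow_self p two_ne_zero) (ZMod p) V := by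
          rw [hW, ZMod.natCast_val, ZMod.castHom_apply]
        rw [h1, hV, map_sum]
        refine Finset.sum_congr rfl fun k hk => ?_
        rw [Finset.mem_Icc] at hk
        rw [map_mul, map_pow, map_neg, map_one]
        congr 1
        have hu : IsUnit ((k : ℕ) : ZMod (p ^ 2)) := by
          rw [ZMod.isUnit_iff_coprime]
          exact (aux_cop p hp k hk.1 (le_trans hk.2 hd2)).symm.pow_right 2
        have h2 : ((k : ℕ) : ZMod (p ^ 2)) * ((k : ℕ) : ZMod (p ^ 2))⁻¹ = 1 :=
          ZMod.mul_inv_of_unit _ hu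
        have h3 := congrArg (ZMod.castHom (dvd_pow_self p two_ne_zero) (ZMod p)) h2
        rw [map_mul, map_one, map_natCast] at h3
        exact (inv_eq_of_mul_eq_one_right h3).symm
      exact hsum (hcast ▸ hW0)
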